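/- Let X be a nowhere dense subset of ℝ that is not closed-and-discrete, and let I be a bounded open interval with I ∩ X infinite. Let D be the set of lengths of the connected components of I \ Cl(X). Then D is infinite, bounded, discrete, and Cl(D) = D ∪ {0}. -/

import Mathlib

open Set

-- components of an open subset of (a,b) are open intervals
lemma comp_form {a b : ℝ} {S : Set ℝ} (hSo : IsOpen S) (hSsub : S ⊆ Set.Ioo a b)
    {y : ℝ} (hy : y ∈ S) :
    ∃ c d : ℝ, a ≤ c ∧ c < d ∧ d ≤ b ∧ y ∈ Set.Ioo c d ∧
      connectedComponentIn S y = Set.Ioo c d := by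
  set K := connectedComponentIn S y with hK
  have hKo : IsOpen K := hSo.connectedComponentIn
  have hyK : y ∈ K := mem_connectedComponentIn hy
  have hKsub : K ⊆ Set.Ioo a b := (connectedComponentIn_subset S y).trans hSsub
  have hKne : K.Nonempty := ⟨y, hyK⟩
  have hbdd : BddAbove K := BddAbove.mono hKsub (bddAbove_Ioo)
  have hbddb : BddBelow K := BddBelow.mono hKsub (bddBelow_Ioo)
  set c := sInf K
  set d := sSup K
  have hKIoo : K ⊆ Set.Ioo c d := by
    intro x hx
    have h1 : c ≤ x := csInf_le hbddb hx
    have h2 : x ≤ d := le_csSup hbdd hx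
    constructor
    · rcases h1.lt_or_eq with h | h
      · exact h
      · exfalso
        rcases Metric.isOpen_iff.1 hKo x hx with ⟨ε, hε, hball⟩
        have : x - ε/2 ∈ K := by
          apply hball
          rw [Metric.mem_ball, Real.dist_eq, abs_of_nonpos (by linarith)]
          linarith
        have := csInf_le hbddb this
        rw [← h] at this
        linarith
    · rcases h2.lt_or_eq with h | h
      · exact h
      · exfalso
        rcases Metric.isOpen_iff.1 hKo x hx with ⟨ε, hε, hball⟩
        have : x + ε/2 ∈ K := by
          apply hball
          rw [Metric.mem_ball, Real.dist_eq, abs_of_nonneg (by linarith)]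
          linarith
        have := le_csSup hbdd this
        rw [h] at this
        linarith
  have hIooK : Set.Ioo c d ⊆ K := by
    intro x hx
    obtain ⟨u, huK, hux⟩ := exists_lt_of_csInf_lt hKne hx.1
    obtain ⟨v, hvK, hxv⟩ := exists_lt_of_lt_csSup hKne hx.2
    have hord : OrdConnected K := isPreconnected_connectedComponentIn.ordConnected
    exact hord.out huK hvK ⟨hux.le, hxv.le⟩
  have hKeq : K = Set.Ioo c d := Set.Subset.antisymm hKIoo hIooK
  have hyIoo : y ∈ Set.Ioo c d := hKeq ▸ hyK
  refine ⟨c, d, ?_, hyIoo.1.trans hyIoo.2, ?_, hyIoo, hKeq⟩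
  · exact le_csInf hKne (fun x hx => (hKsub hx).1.le)
  · exact csSup_le hKne (fun x hx => (hKsub hx).2.le)

-- midpoints of disjoint intervals of length ≥ ε are ε-separated
lemma sep_mid {c₁ d₁ c₂ d₂ ε : ℝ} (h₁ : c₁ < d₁) (h₂ : c₂ < d₂)
    (hd : Disjoint (Set.Ioo c₁ d₁) (Set.Ioo c₂ d₂))
    (hl₁ : ε ≤ d₁ - c₁) (hl₂ : ε ≤ d₂ - c₂) :
    ε ≤ |(c₁ + d₁) / 2 - (c₂ + d₂) / 2| := by
  rcases le_or_gt d₁ c₂ with h | h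
  · rw [abs_sub_comm, abs_of_nonneg (by linarith)]
    linarith
  rcases le_or_gt d₂ c₁ with h' | h'
  · rw [abs_of_nonneg (by linarith)]
    linarith
  · exfalso
    have hlt : max c₁ c₂ < min d₁ d₂ := max_lt (lt_min h₁ h') (lt_min h h₂)
    refine Set.not_disjoint_iff.2 ⟨(max c₁ c₂ + min d₁ d₂) / 2, ?_, ?_⟩ hd
    · constructor
      · calc c₁ ≤ max c₁ c₂ := le_max_left _ _
          _ < _ := by linarith
      · calc (max c₁ c₂ + min d₁ d₂)/2 < min d₁ d₂ := by linarith
          _ ≤ d₁ := min_le_left _ _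
    · constructor
      · calc c₂ ≤ max c₁ c₂ := le_max_right _ _
          _ < _ := by linarith
      · calc (max c₁ c₂ + min d₁ d₂)/2 < min d₁ d₂ := by linarith
          _ ≤ d₂ := min_le_right _ _

lemma floor_ne_of_sep {m₁ m₂ ε : ℝ} (hε : 0 < ε) (h : ε ≤ |m₁ - m₂|) :
    ⌊m₁ / ε⌋ ≠ ⌊m₂ / ε⌋ := by
  have key : ∀ x y : ℝ, x + ε ≤ y → ⌊x / ε⌋ ≠ ⌊y / ε⌋ := by
    intro x y hxy
    have h1 : x / ε + 1 ≤ y / ε := by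
      rw [div_add' _ _ _ hε.ne', one_mul]
      exact (div_le_div_iff_of_pos_right hε).2 hxy
    have h2 : ⌊x / ε⌋ + 1 ≤ ⌊y / ε⌋ := by
      have := Int.floor_le_floor h1
      rwa [Int.floor_add_one] at this
    omega
  rcases abs_cases (m₁ - m₂) with ⟨he, _⟩ | ⟨he, _⟩
  · exact (key m₂ m₁ (by linarith)).symm
  · exact key m₁ m₂ (by linarith)

lemma finite_big {S : Set ℝ} {a b : ℝ} (hS : S ⊆ Set.Ioo a b) {ε : ℝ} (hε : 0 < ε) :
    ({l : ℝ | ∃ c d : ℝ, c < d ∧ l = d - c ∧ ∃ y ∈ Set.Ioo c d,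
      connectedComponentIn S y = Set.Ioo c d} ∩ Set.Ici ε).Finite := by
  set E := {l : ℝ | ∃ c d : ℝ, c < d ∧ l = d - c ∧ ∃ y ∈ Set.Ioo c d,
      connectedComponentIn S y = Set.Ioo c d} ∩ Set.Ici ε with hE
  have hsel : ∀ l ∈ E, ∃ p : ℝ × ℝ, p.1 < p.2 ∧ l = p.2 - p.1 ∧ ∃ y ∈ Set.Ioo p.1 p.2,
      connectedComponentIn S y = Set.Ioo p.1 p.2 := by
    rintro l ⟨⟨c, d, h1, h2, h3⟩, -⟩
    exact ⟨(c, d), h1, h2, h3⟩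
  choose! p hp1 hp2 hp3 using hsel
  set g : ℝ → ℤ := fun l => ⌊((p l).1 + (p l).2) / 2 / ε⌋ with hg
  -- basic facts
  have hbound : ∀ l ∈ E, a ≤ (p l).1 ∧ (p l).2 ≤ b := by
    intro l hl
    obtain ⟨y, hy, hcomp⟩ := hp3 l hl
    have hsub : Set.Ioo (p l).1 (p l).2 ⊆ Set.Ioo a b := by
      rw [← hcomp]; exact (connectedComponentIn_subset S y).trans hS
    exact (Set.Ioo_subset_Ioo_iff (hp1 l hl)).1 hsub
  apply Set.Finite.of_finite_image (f := g)
  · apply Set.Finite.subset (Set.finite_Icc ⌊a / ε⌋ ⌊b / ε⌋)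
    rintro z ⟨l, hl, rfl⟩
    obtain ⟨ha, hb⟩ := hbound l hl
    have h1 := hp1 l hl
    constructor
    · exact Int.floor_le_floor (by apply div_le_div_of_nonneg_right ?_ hε.le; linarith)
    · exact Int.floor_le_floor (by apply div_le_div_of_nonneg_right ?_ hε.le; linarith)
  · intro l₁ hl₁ l₂ hl₂ hgl
    by_contra hne
    obtain ⟨y₁, hy₁, hc₁⟩ := hp3 l₁ hl₁
    obtain ⟨y₂, hy₂, hc₂⟩ := hp3 l₂ hl₂
    have hdisj : Disjoint (Set.Ioo (p l₁).1 (p l₁).2) (Set.Ioo (p l₂).1 (p l₂).2) := by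
      rw [Set.disjoint_left]
      intro z hz1 hz2
      rw [← hc₁] at hz1
      rw [← hc₂] at hz2
      have e1 : connectedComponentIn S z = Set.Ioo (p l₁).1 (p l₁).2 :=
        (connectedComponentIn_eq hz1).symm.trans hc₁
      have e2 : connectedComponentIn S z = Set.Ioo (p l₂).1 (p l₂).2 :=
        (connectedComponentIn_eq hz2).symm.trans hc₂
      have heq : Set.Ioo (p l₁).1 (p l₁).2 = Set.Ioo (p l₂).1 (p l₂).2 := e1 ▸ e2
      have hc : (p l₁).1 = (p l₂).1 := by
        rw [← csInf_Ioo (hp1 l₁ hl₁), ← csInf_Ioo (hp1 l₂ hl₂), heq]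
      have hd : (p l₁).2 = (p l₂).2 := by
        rw [← csSup_Ioo (hp1 l₁ hl₁), ← csSup_Ioo (hp1 l₂ hl₂), heq]
      exact hne (by rw [hp2 l₁ hl₁, hp2 l₂ hl₂, hc, hd])
    have hsep := sep_mid (hp1 l₁ hl₁) (hp1 l₂ hl₂) hdisj
      (hp2 l₁ hl₁ ▸ hl₁.2) (hp2 l₂ hl₂ ▸ hl₂.2)
    exact floor_ne_of_sep hε hsep hgl

lemma small_mem {X : Set ℝ} (hnd : IsNowhereDense X) {a b : ℝ}
    (hinf : (Set.Ioo a b ∩ X).Infinite) {ε : ℝ} (hε : 0 < ε) :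
    ∃ l ∈ {l : ℝ | ∃ c d : ℝ, c < d ∧ l = d - c ∧ ∃ y ∈ Set.Ioo c d,
      connectedComponentIn (Set.Ioo a b \ closure X) y = Set.Ioo c d}, l < ε := by
  set S : Set ℝ := Set.Ioo a b \ closure X with hSdef
  have hSo : IsOpen S := isOpen_Ioo.sdiff isClosed_closure
  have hSsub : S ⊆ Set.Ioo a b := Set.diff_subset
  set T : Set ℝ := Set.Ioo a b ∩ closure X with hTdef
  have hT : T.Infinite := hinf.mono (Set.inter_subset_inter_right _ subset_closure)
  obtain ⟨t, -, hacc⟩ := hT.exists_accPt_of_subset_isCompact isCompact_Icc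
    (Set.inter_subset_left.trans Set.Ioo_subset_Icc_self)
  rw [accPt_iff_nhds] at hacc
  obtain ⟨t₁, ⟨ht₁b, ht₁T⟩, ht₁ne⟩ := hacc (Metric.ball t (ε/4))
    (Metric.ball_mem_nhds t (by positivity))
  have hdpos : 0 < dist t₁ t := dist_pos.2 ht₁ne
  obtain ⟨t₂, ⟨ht₂b, ht₂T⟩, ht₂ne⟩ := hacc (Metric.ball t (dist t₁ t))
    (Metric.ball_mem_nhds t hdpos)
  have hne12 : t₂ ≠ t₁ := by
    intro h; rw [Metric.mem_ball, h] at ht₂b; exact lt_irrefl _ ht₂b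
  set u := min t₁ t₂
  set v := max t₁ t₂
  have huv : u < v := min_lt_max.2 (Ne.symm hne12)
  have huT : u ∈ T := by rcases min_cases t₁ t₂ with ⟨h, -⟩ | ⟨h, -⟩ <;> rw [show u = _ from h] <;> assumption
  have hvT : v ∈ T := by rcases max_cases t₁ t₂ with ⟨h, -⟩ | ⟨h, -⟩ <;> rw [show v = _ from h] <;> assumption
  have hvu : v - u < ε := by
    have h1 : |t₁ - t| < ε/4 := by rw [← Real.dist_eq]; exact ht₁b
    have h2 : |t₂ - t| < ε/4 := by
      rw [← Real.dist_eq]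
      calc dist t₂ t < dist t₁ t := ht₂b
        _ < ε/4 := ht₁b
    obtain ⟨p1, p2⟩ := abs_lt.1 h1
    obtain ⟨q1, q2⟩ := abs_lt.1 h2
    rcases max_cases t₁ t₂ with ⟨hm, hm'⟩ | ⟨hm, hm'⟩ <;>
      rcases min_cases t₁ t₂ with ⟨hn, hn'⟩ | ⟨hn, hn'⟩ <;>
      simp only [u, v] <;> rw [hm, hn] <;> linarith
  -- find a point of S strictly between u and v
  have hnotsub : ¬ (Set.Ioo u v ⊆ closure X) := by
    intro h
    have h2 : Set.Ioo u v ⊆ interior (closure X) := interior_maximal h isOpen_Ioo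
    rw [hnd] at h2
    exact (Set.nonempty_Ioo.2 huv).ne_empty (Set.subset_empty_iff.1 h2)
  obtain ⟨w, hwIoo, hwX⟩ := Set.not_subset.1 hnotsub
  have hwab : w ∈ Set.Ioo a b := ⟨lt_trans huT.1.1 hwIoo.1, lt_trans hwIoo.2 hvT.1.2⟩
  have hwS : w ∈ S := ⟨hwab, hwX⟩
  obtain ⟨c, d, hac, hcd, hdb, hwcd, hcomp⟩ := comp_form hSo hSsub hwS
  have hIooS : Set.Ioo c d ⊆ S := hcomp ▸ connectedComponentIn_subset S w
  have huc : u ≤ c := by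
    by_contra h
    exact (hIooS ⟨lt_of_not_ge h, lt_trans hwIoo.1 hwcd.2⟩).2 huT.2
  have hdv : d ≤ v := by
    by_contra h
    exact (hIooS ⟨lt_trans hwcd.1 hwIoo.2, lt_of_not_ge h⟩).2 hvT.2
  exact ⟨d - c, ⟨c, d, hcd, rfl, w, hwcd, hcomp⟩, by linarith⟩



/-- Let `X ⊆ ℝ` be nowhere dense and not closed-and-discrete, and let
`I = (a,b)` be a bounded open interval with `I ∩ X` infinite.  Let `D` be the
set of lengths of the connected components of `I \ Cl(X)`.  Then `D` is
infinite, bounded, discrete, and `Cl(D) = D ∪ {0}`. -/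
theorem stmt6 (X : Set ℝ) (hnd : IsNowhereDense X)
    (hncd : ¬ (IsClosed X ∧ ∀ x ∈ X, ∃ U : Set ℝ, IsOpen U ∧ U ∩ X = {x}))
    (a b : ℝ) (hab : a < b) (hinf : (Set.Ioo a b ∩ X).Infinite)
    (D : Set ℝ)
    (hD : D = {l : ℝ | ∃ c d : ℝ, c < d ∧ l = d - c ∧
      ∃ y ∈ Set.Ioo c d, connectedComponentIn (Set.Ioo a b \ closure X) y = Set.Ioo c d}) :
    D.Infinite ∧ Bornology.IsBounded D ∧
      (∀ l ∈ D, ∃ U : Set ℝ, IsOpen U ∧ U ∩ D = {l}) ∧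
      closure D = D ∪ {0} := by
  have hSsub : Set.Ioo a b \ closure X ⊆ Set.Ioo a b := Set.diff_subset
  have hDpos : D ⊆ Set.Ioc 0 (b - a) := by
    rw [hD]
    rintro l ⟨c, d, hcd, rfl, y, hy, hcomp⟩
    have hsub : Set.Ioo c d ⊆ Set.Ioo a b := by
      rw [← hcomp]; exact (connectedComponentIn_subset _ y).trans hSsub
    obtain ⟨hac, hdb⟩ := (Set.Ioo_subset_Ioo_iff hcd).1 hsub
    exact ⟨by linarith, by linarith⟩
  have hsmall : ∀ ε > 0, ∃ l ∈ D, l < ε := by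
    intro ε hε; rw [hD]; exact small_mem hnd hinf hε
  have hfin : ∀ ε > 0, (D ∩ Set.Ici ε).Finite := by
    intro ε hε; rw [hD]; exact finite_big hSsub hε
  have hDinf : D.Infinite := by
    intro hfinD
    obtain ⟨l₀, hl₀, -⟩ := hsmall 1 one_pos
    have hne : D.Nonempty := ⟨l₀, hl₀⟩
    have hmem := hne.csInf_mem hfinD
    have hpos : 0 < sInf D := (hDpos hmem).1
    obtain ⟨l, hl, hlt⟩ := hsmall (sInf D) hpos
    exact absurd (csInf_le hfinD.bddBelow hl) (not_le.2 hlt)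
  refine ⟨hDinf, ?_, ?_, ?_⟩
  · exact (Metric.isBounded_Icc 0 (b - a)).subset (hDpos.trans Set.Ioc_subset_Icc_self)
  · intro l hl
    have hlpos : 0 < l := (hDpos hl).1
    have hF : ((D ∩ Set.Ici (l/2)) \ {l}).Finite := (hfin (l/2) (by linarith)).diff
    refine ⟨Set.Ioi (l/2) \ ((D ∩ Set.Ici (l/2)) \ {l}),
      IsOpen.sdiff isOpen_Ioi hF.isClosed, ?_⟩
    ext x
    simp only [Set.mem_inter_iff, Set.mem_diff, Set.mem_Ioi, Set.mem_singleton_iff, Set.mem_Ici]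
    constructor
    · rintro ⟨⟨hx1, hx2⟩, hxD⟩
      by_contra hne
      exact hx2 ⟨⟨hxD, hx1.le⟩, hne⟩
    · rintro rfl
      exact ⟨⟨by linarith, fun h => h.2 rfl⟩, hl⟩
  · apply Set.Subset.antisymm
    · intro x hx
      by_cases hx0 : x = 0
      · exact Or.inr hx0
      left
      have hxnn : 0 ≤ x := by
        have h2 : closure D ⊆ Set.Icc 0 (b - a) := by
          have h3 := closure_mono (hDpos.trans Set.Ioc_subset_Icc_self)
          rwa [isClosed_Icc.closure_eq] at h3
        exact (h2 hx).1
      have hxpos : 0 < x := lt_of_le_of_ne hxnn (Ne.symm hx0)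
      have hsplit : D ⊆ (D ∩ Set.Ici (x/2)) ∪ (D ∩ Set.Iio (x/2)) := by
        intro z hz
        rcases le_or_gt (x/2) z with h | h
        · exact Or.inl ⟨hz, h⟩
        · exact Or.inr ⟨hz, h⟩
      have hx2 := closure_mono hsplit hx
      rw [closure_union] at hx2
      rcases hx2 with h | h
      · rw [(hfin (x/2) (by linarith)).isClosed.closure_eq] at h
        exact h.1
      · exfalso
        have h4 : x ∈ closure (Set.Iio (x/2)) := closure_mono Set.inter_subset_right h
        rw [closure_Iio] at h4
        have := Set.mem_Iic.1 h4
        linarith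
    · rintro x (hx | hx)
      · exact subset_closure hx
      · rw [Set.mem_singleton_iff] at hx; subst hx
        rw [Metric.mem_closure_iff]
        intro ε hε
        obtain ⟨l, hl, hlt⟩ := hsmall ε hε
        have hlpos := (hDpos hl).1
        exact ⟨l, hl, by rw [Real.dist_eq, abs_of_nonpos (by linarith)]; linarith⟩
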